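/- For every fixed integer k ≥ 2, the limit as n → ∞ of m̄(n, k) · k(k−1)/(n(n−1)) equals 1. -/

import Mathlib

/-- A set `T` of vertices of a hypergraph with edge set `E` is affinely closed iff
every edge sharing at least two vertices with `T` is fully contained in `T`. -/
def AffClosed {α : Type*} (E : Set (Set α)) (T : Set α) : Prop :=
  ∀ e ∈ E, 2 ≤ (e ∩ T).ncard → e ⊆ T

/-- The affine closure of a set `S`: the intersection of all affinely closed
supersets of `S`. -/
def affCl {α : Type*} (E : Set (Set α)) (S : Set α) : Set α :=
  ⋂₀ {T | S ⊆ T ∧ AffClosed E T}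

/-- The closure-lines of a hypergraph: the sets `aff {u, v}` for distinct `u, v`. -/
def closureLines {α : Type*} (E : Set (Set α)) : Set (Set α) :=
  {L | ∃ u v : α, u ≠ v ∧ L = affCl E {u, v}}

/-- `mbar n k` is the smallest number of distinct closure-lines in a hypergraph on
`n` vertices in which every closure-line consists of at most `k` vertices. -/
noncomputable def mbar (n k : ℕ) : ℕ :=
  sInf { m | ∃ E : Set (Set (Fin n)),
    (∀ L ∈ closureLines E, L.ncard ≤ k) ∧ (closureLines E).ncard = m }


namespace Stmt13


open Set

variable {α β : Type*}

lemma subset_affCl (E : Set (Set α)) (S : Set α) : S ⊆ affCl E S :=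
  subset_sInter fun _ hT => hT.1

lemma affCl_le {E : Set (Set α)} {S T : Set α} (hST : S ⊆ T) (hT : AffClosed E T) :
    affCl E S ⊆ T := sInter_subset_of_mem ⟨hST, hT⟩

def GoodFam (k : ℕ) (B : Set (Set α)) : Prop :=
  (∀ b ∈ B, 2 ≤ b.ncard ∧ b.ncard ≤ k) ∧
  ∀ b ∈ B, ∀ b' ∈ B, b ≠ b' → (b ∩ b').ncard ≤ 1

def Unc (B : Set (Set α)) : Set (Set α) :=
  {S | ∃ u v : α, u ≠ v ∧ S = {u, v} ∧ ∀ b ∈ B, ¬ S ⊆ b}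

lemma block_closed [Finite α] {k : ℕ} {B : Set (Set α)} (hB : GoodFam k B) {b : Set α}
    (hb : b ∈ B) : AffClosed B b := by
  intro e he h2
  by_cases heb : e = b
  · exact heb.le
  · have := hB.2 e he b hb heb
    omega

lemma affCl_pair_eq_block [Finite α] {k : ℕ} {B : Set (Set α)} (hB : GoodFam k B)
    {b : Set α} (hb : b ∈ B) {u v : α} (huv : u ≠ v) (hsub : ({u, v} : Set α) ⊆ b) :
    affCl B {u, v} = b := by
  apply subset_antisymm (affCl_le hsub (block_closed hB hb))
  refine subset_sInter fun T hT => hT.2 b hb ?_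
  have h1 : ({u, v} : Set α) ⊆ b ∩ T := subset_inter hsub hT.1
  calc 2 = ({u, v} : Set α).ncard := (ncard_pair huv).symm
    _ ≤ _ := ncard_le_ncard h1 (toFinite _)

lemma affCl_pair_self [Finite α] {B : Set (Set α)} {u v : α} (huv : u ≠ v)
    (hunc : ∀ b ∈ B, ¬ ({u, v} : Set α) ⊆ b) : affCl B {u, v} = {u, v} := by
  apply subset_antisymm _ (subset_affCl _ _)
  refine affCl_le subset_rfl ?_
  intro e he h2
  exfalso
  have heq : e ∩ {u, v} = {u, v} := by
    apply Set.eq_of_subset_of_ncard_le inter_subset_right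
    rwa [ncard_pair huv]
  exact hunc e he (by rw [← heq]; exact inter_subset_left)

lemma lines_subset [Finite α] {k : ℕ} {B : Set (Set α)} (hB : GoodFam k B) :
    closureLines B ⊆ B ∪ Unc B := by
  rintro L ⟨u, v, huv, rfl⟩
  by_cases h : ∃ b ∈ B, ({u, v} : Set α) ⊆ b
  · obtain ⟨b, hb, hsub⟩ := h
    rw [affCl_pair_eq_block hB hb huv hsub]
    exact Or.inl hb
  · push_neg at h
    exact Or.inr ⟨u, v, huv, affCl_pair_self huv h, by
      rw [affCl_pair_self huv h]; exact h⟩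

lemma lines_ncard_le [Finite α] {k : ℕ} (hk : 2 ≤ k) {B : Set (Set α)} (hB : GoodFam k B) :
    ∀ L ∈ closureLines B, L.ncard ≤ k := by
  intro L hL
  rcases lines_subset hB hL with h | ⟨u, v, huv, rfl, -⟩
  · exact (hB.1 L h).2
  · rw [ncard_pair huv]; exact hk

lemma ncard_biUnion_le {ι : Type*} [Finite α] (s : Finset ι) (f : ι → Set α) :
    (⋃ i ∈ s, f i).ncard ≤ ∑ i ∈ s, (f i).ncard := by
  classical
  induction s using Finset.induction with
  | empty => simp
  | insert _ _ h ih =>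
    rw [Finset.set_biUnion_insert, Finset.sum_insert h]
    exact le_trans (ncard_union_le _ _) (add_le_add le_rfl ih)

lemma lines_lower_bound {n k : ℕ} (E : Set (Set (Fin n)))
    (h : ∀ L ∈ closureLines E, L.ncard ≤ k) :
    n * n - n ≤ (closureLines E).ncard * (k * k - k) := by
  classical
  set F := (closureLines E).toFinite.toFinset with hF
  have cover : (Set.offDiag (Set.univ : Set (Fin n))) ⊆ ⋃ L ∈ F, Set.offDiag L := by
    rintro ⟨u, v⟩ ⟨-, -, huv⟩
    have hmem : affCl E {u, v} ∈ F := by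
      simp only [hF, Set.Finite.mem_toFinset]
      exact ⟨u, v, huv, rfl⟩
    refine Set.mem_biUnion hmem ?_
    exact ⟨subset_affCl E {u, v} (by simp), subset_affCl E {u, v} (by simp), huv⟩
  have lhs : (Set.offDiag (Set.univ : Set (Fin n))).ncard = n * n - n := by
    rw [← Finset.coe_univ, ← Finset.coe_offDiag, ncard_coe_finset,
      Finset.offDiag_card, Finset.card_univ, Fintype.card_fin]
  have per : ∀ L ∈ F, (Set.offDiag L).ncard ≤ k * k - k := by
    intro L hL
    have hLk : L.ncard ≤ k := h L (by rwa [hF, Set.Finite.mem_toFinset] at hL)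
    have : (Set.offDiag L).ncard = L.ncard * L.ncard - L.ncard := by
      have h0 : Set.offDiag L = ↑(L.toFinite.toFinset.offDiag) := by
        rw [Finset.coe_offDiag, Set.Finite.coe_toFinset]
      rw [h0, ncard_coe_finset, Finset.offDiag_card,
        ← Set.ncard_eq_toFinset_card L L.toFinite]
    rw [this]
    have h1 : L.ncard * L.ncard - L.ncard = L.ncard * (L.ncard - 1) := by
      cases' Nat.eq_zero_or_pos L.ncard with h0 h0
      · simp [h0]
      · rw [Nat.mul_sub_one, Nat.mul_comm]
    have h2 : k * k - k = k * (k - 1) := by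
      cases' Nat.eq_zero_or_pos k with h0 h0
      · simp [h0]
      · rw [Nat.mul_sub_one, Nat.mul_comm]
    rw [h1, h2]
    exact Nat.mul_le_mul hLk (Nat.sub_le_sub_right hLk 1)
  calc n * n - n = (Set.offDiag (Set.univ : Set (Fin n))).ncard := lhs.symm
    _ ≤ (⋃ L ∈ F, Set.offDiag L).ncard := ncard_le_ncard cover (toFinite _)
    _ ≤ ∑ L ∈ F, (Set.offDiag L).ncard := ncard_biUnion_le F _
    _ ≤ ∑ _L ∈ F, (k * k - k) := Finset.sum_le_sum per
    _ = F.card * (k * k - k) := by rw [Finset.sum_const, smul_eq_mul]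
    _ = (closureLines E).ncard * (k * k - k) := by
        have : F.card = (closureLines E).ncard := by
          rw [hF]; exact (Set.ncard_eq_toFinset_card _ _).symm
        rw [this]

lemma goodFam_image {f : α → β} (hf : Function.Injective f) {k : ℕ} {B : Set (Set α)}
    (hB : GoodFam k B) : GoodFam k ((Set.image f) '' B) := by
  constructor
  · rintro b ⟨b0, hb0, rfl⟩
    rw [Set.ncard_image_of_injective _ hf]
    exact hB.1 b0 hb0
  · rintro b ⟨b0, hb0, rfl⟩ b' ⟨b0', hb0', rfl⟩ hne
    have hne0 : b0 ≠ b0' := by rintro rfl; exact hne rfl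
    rw [← Set.image_inter hf, Set.ncard_image_of_injective _ hf]
    exact hB.2 b0 hb0 b0' hb0' hne0

lemma unc_image_subset (f : α ≃ β) (B : Set (Set α)) :
    Unc ((Set.image f) '' B) ⊆ (Set.image f) '' (Unc B) := by
  rintro S ⟨u, v, huv, rfl, hunc⟩
  refine ⟨{f.symm u, f.symm v}, ⟨f.symm u, f.symm v, fun h => huv (by
    simpa using congrArg f h), rfl, ?_⟩, ?_⟩
  · intro b0 hb0 hsub
    refine hunc (f '' b0) ⟨b0, hb0, rfl⟩ ?_
    rintro x (rfl | rfl)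
    · exact ⟨f.symm x, hsub (by simp), by simp⟩
    · exact ⟨f.symm x, hsub (by simp), by simp⟩
  · rw [Set.image_pair]; simp

lemma unc_ncard_le [Finite α] (B : Set (Set α)) :
    (Unc B).ncard ≤ Nat.card α * Nat.card α := by
  have hsub : Unc B ⊆ (fun p : α × α => ({p.1, p.2} : Set α)) '' Set.univ := by
    rintro S ⟨u, v, -, rfl, -⟩
    exact ⟨(u, v), trivial, rfl⟩
  calc (Unc B).ncard ≤ _ := Set.ncard_le_ncard hsub (toFinite _)
    _ ≤ (Set.univ : Set (α × α)).ncard := Set.ncard_image_le (toFinite _)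
    _ = Nat.card α * Nat.card α := by rw [Set.ncard_univ, Nat.card_prod]

lemma pairs_touch_bound [Finite α] (W : Set α) :
    ({S | ∃ u v : α, S = {u, v} ∧ (u ∈ W ∨ v ∈ W)} : Set (Set α)).ncard
      ≤ W.ncard * Nat.card α := by
  classical
  have hsub : ({S | ∃ u v : α, S = {u, v} ∧ (u ∈ W ∨ v ∈ W)} : Set (Set α)) ⊆
      (fun p : W × α => ({p.1.1, p.2} : Set α)) '' Set.univ := by
    rintro S ⟨u, v, rfl, h | h⟩
    · exact ⟨(⟨u, h⟩, v), trivial, rfl⟩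
    · exact ⟨(⟨v, h⟩, u), trivial, (Set.pair_comm v u)⟩
  calc _ ≤ _ := Set.ncard_le_ncard hsub (toFinite _)
    _ ≤ (Set.univ : Set (W × α)).ncard := Set.ncard_image_le (toFinite _)
    _ = W.ncard * Nat.card α := by
        rw [Set.ncard_univ, Nat.card_prod, Nat.card_coe_set_eq]


def ExFam (k : ℕ) (α : Type*) (r : ℝ) : Prop :=
  ∃ B : Set (Set α), GoodFam k B ∧ ((B.ncard : ℝ) + ((Unc B).ncard : ℝ) ≤ r)

lemma exFam_transfer {α β : Type*} [Finite α] [Finite β] (f : α ≃ β) {k : ℕ} {r : ℝ}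
    (h : ExFam k α r) : ExFam k β r := by
  obtain ⟨B, hB, hcount⟩ := h
  refine ⟨(Set.image f) '' B, goodFam_image f.injective hB, ?_⟩
  have h1 : ((Set.image f) '' B).ncard = B.ncard :=
    Set.ncard_image_of_injective _ (Set.image_injective.2 f.injective)
  have h2 : (Unc ((Set.image f) '' B)).ncard ≤ (Unc B).ncard :=
    le_trans (Set.ncard_le_ncard (unc_image_subset f B) (toFinite _))
      (Set.ncard_image_le (toFinite _))
  rw [h1]
  have h2r : ((Unc ((Set.image f) '' B)).ncard : ℝ) ≤ ((Unc B).ncard : ℝ) := by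
    exact_mod_cast h2
  linarith


variable {k m s : ℕ}

/-- A transversal-design block. -/
def Block (k m : ℕ) (a d : ZMod m) : Set (Fin k × ZMod m) :=
  Set.range fun i : Fin k => (i, a + ((i : ℕ) : ZMod m) * d)

lemma mem_block {a d : ZMod m} {p : Fin k × ZMod m} :
    p ∈ Block k m a d ↔ p.2 = a + ((p.1 : ℕ) : ZMod m) * d := by
  constructor
  · rintro ⟨i, rfl⟩; rfl
  · intro h
    exact ⟨p.1, Prod.ext rfl h.symm⟩

lemma block_ncard [NeZero m] (a d : ZMod m) : (Block k m a d).ncard = k := by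
  have hinj : Function.Injective fun i : Fin k => (i, a + ((i : ℕ) : ZMod m) * d) :=
    fun i j hij => congrArg Prod.fst hij
  rw [Block, ← Set.image_univ, Set.ncard_image_of_injective _ hinj, Set.ncard_univ]
  simp

lemma diff_unit (hcop : ∀ c : ℕ, 1 ≤ c → c < k → IsUnit ((c : ZMod m)))
    {i j : Fin k} (hij : i ≠ j) :
    IsUnit (((i : ℕ) : ZMod m) - ((j : ℕ) : ZMod m)) := by
  rcases lt_or_gt_of_ne (fun h : (i : ℕ) = (j : ℕ) => hij (Fin.ext h)) with h | h
  · have : (((j : ℕ) - (i : ℕ) : ℕ) : ZMod m) = ((j : ℕ) : ZMod m) - ((i : ℕ) : ZMod m) :=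
      Nat.cast_sub h.le
    have hu : IsUnit ((((j : ℕ) - (i : ℕ) : ℕ) : ZMod m)) :=
      hcop _ (by omega) (by have := j.isLt; omega)
    rw [this] at hu
    simpa using hu.neg
  · have : (((i : ℕ) - (j : ℕ) : ℕ) : ZMod m) = ((i : ℕ) : ZMod m) - ((j : ℕ) : ZMod m) :=
      Nat.cast_sub h.le
    have hu : IsUnit ((((i : ℕ) - (j : ℕ) : ℕ) : ZMod m)) :=
      hcop _ (by omega) (by have := i.isLt; omega)
    rwa [this] at hu

lemma block_inter [NeZero m] (hcop : ∀ c : ℕ, 1 ≤ c → c < k → IsUnit ((c : ZMod m)))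
    {a d a' d' : ZMod m} (hne : ¬(a = a' ∧ d = d')) :
    (Block k m a d ∩ Block k m a' d').ncard ≤ 1 := by
  rw [Set.ncard_le_one (toFinite _)]
  rintro ⟨i, x⟩ ⟨hp1, hp2⟩ ⟨j, y⟩ ⟨hq1, hq2⟩
  rw [mem_block] at hp1 hp2 hq1 hq2
  dsimp only at hp1 hp2 hq1 hq2
  by_cases hij : i = j
  · subst hij
    simp only [Prod.mk.injEq]
    rw [hp1, hq1]
    simp
  · exfalso
    have hu := diff_unit hcop hij
    have key : (((i : ℕ) : ZMod m) - ((j : ℕ) : ZMod m)) * (d - d') = 0 := by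
      have e1 : a + ((i : ℕ) : ZMod m) * d = a' + ((i : ℕ) : ZMod m) * d' := by
        rw [← hp1, ← hp2]
      have e2 : a + ((j : ℕ) : ZMod m) * d = a' + ((j : ℕ) : ZMod m) * d' := by
        rw [← hq1, ← hq2]
      linear_combination e1 - e2
    have hdd : d = d' := sub_eq_zero.mp ((IsUnit.mul_right_eq_zero hu).mp key)
    subst hdd
    have e1 : a + ((i : ℕ) : ZMod m) * d = a' + ((i : ℕ) : ZMod m) * d := by
      rw [← hp1, ← hp2]
    exact hne ⟨add_right_cancel e1, rfl⟩

lemma block_cover [NeZero m] (hcop : ∀ c : ℕ, 1 ≤ c → c < k → IsUnit ((c : ZMod m)))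
    {i j : Fin k} (hij : i ≠ j) (x y : ZMod m) :
    ∃ a d : ZMod m, (i, x) ∈ Block k m a d ∧ (j, y) ∈ Block k m a d := by
  obtain ⟨u, hu⟩ := diff_unit hcop hij
  set d : ZMod m := ↑u⁻¹ * (x - y) with hd
  refine ⟨x - ((i : ℕ) : ZMod m) * d, d, ?_, ?_⟩
  · rw [mem_block]; ring
  · rw [mem_block]
    have h1 : (((i : ℕ) : ZMod m) - ((j : ℕ) : ZMod m)) * ↑u⁻¹ = 1 := by
      rw [← hu, ← Units.val_mul, mul_inv_cancel, Units.val_one]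
    calc (j, y).2 = y := rfl
      _ = x - ((((i : ℕ) : ZMod m) - ((j : ℕ) : ZMod m)) * ↑u⁻¹) * (x - y) := by
          rw [h1]; ring
      _ = x - ((i : ℕ) : ZMod m) * d + ((j : ℕ) : ZMod m) * d := by
          rw [hd]; ring

abbrev Gam (k m s : ℕ) : Type := (Fin k × ZMod m) ⊕ (Fin s)

def lift (k m s : ℕ) (g : Fin k) (x : ZMod m) : Gam k m s := Sum.inl (g, x)

lemma lift_inj (k m s : ℕ) (g : Fin k) : Function.Injective (lift k m s g) := by
  intro x y h
  simpa [lift, Prod.ext_iff] using h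

def TDfam (k m s : ℕ) : Set (Set (Gam k m s)) :=
  (fun p : ZMod m × ZMod m => Sum.inl '' Block k m p.1 p.2) '' Set.univ

def BigFam (k m s : ℕ) (B' : Set (Set (ZMod m))) : Set (Set (Gam k m s)) :=
  TDfam k m s ∪ ⋃ g : Fin k, (Set.image (lift k m s g)) '' B'

variable {k m s : ℕ} [NeZero m]

lemma td_lift_inter (a d : ZMod m) (g : Fin k) (b0 : Set (ZMod m)) :
    ((Sum.inl '' Block k m a d : Set (Gam k m s)) ∩ (lift k m s g '' b0)).ncard ≤ 1 := by
  rw [Set.ncard_le_one (toFinite _)]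
  rintro z ⟨hz1, x0, -, rfl⟩ w ⟨hw1, y0, -, rfl⟩
  obtain ⟨p, hp, hpe⟩ := hz1
  obtain ⟨q, hq, hqe⟩ := hw1
  have hp' : p = (g, x0) := Sum.inl_injective hpe
  have hq' : q = (g, y0) := Sum.inl_injective hqe
  subst hp' hq'
  rw [mem_block] at hp hq
  simp only [lift]
  dsimp only at hp hq
  rw [hp, hq]

theorem step (hk : 2 ≤ k)
    (hcop : ∀ c : ℕ, 1 ≤ c → c < k → IsUnit ((c : ZMod m)))
    {B' : Set (Set (ZMod m))} (hB' : GoodFam k B') :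
    GoodFam k (BigFam k m s B') ∧
    (BigFam k m s B').ncard ≤ m * m + k * B'.ncard ∧
    (Unc (BigFam k m s B')).ncard ≤ k * (Unc B').ncard + s * (k * m + s) := by
  classical
  have hsizes : ∀ b ∈ BigFam k m s B', 2 ≤ b.ncard ∧ b.ncard ≤ k := by
    rintro b (⟨⟨a, d⟩, -, rfl⟩ | hb)
    · rw [Set.ncard_image_of_injective _ Sum.inl_injective, block_ncard]
      exact ⟨hk, le_rfl⟩
    · obtain ⟨g, hg⟩ := Set.mem_iUnion.mp hb
      obtain ⟨b0, hb0, rfl⟩ := hg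
      rw [Set.ncard_image_of_injective _ (lift_inj k m s g)]
      exact hB'.1 b0 hb0
  have hpair : ∀ b ∈ BigFam k m s B', ∀ b' ∈ BigFam k m s B', b ≠ b' →
      (b ∩ b').ncard ≤ 1 := by
    rintro b hb b' hb' hne
    rcases hb with ⟨⟨a, d⟩, -, rfl⟩ | hb
    · rcases hb' with ⟨⟨a', d'⟩, -, rfl⟩ | hb'
      · -- TD vs TD
        have hpar : ¬(a = a' ∧ d = d') := by
          rintro ⟨rfl, rfl⟩; exact hne rfl
        rw [← Set.image_inter Sum.inl_injective,
          Set.ncard_image_of_injective _ Sum.inl_injective]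
        exact block_inter hcop hpar
      · obtain ⟨g, b0, hb0, rfl⟩ := Set.mem_iUnion.mp hb'
        exact td_lift_inter a d g b0
    · obtain ⟨g, b0, hb0, rfl⟩ := Set.mem_iUnion.mp hb
      rcases hb' with ⟨⟨a', d'⟩, -, rfl⟩ | hb'
      · rw [Set.inter_comm]
        exact td_lift_inter a' d' g b0
      · obtain ⟨g', b0', hb0', rfl⟩ := Set.mem_iUnion.mp hb'
        by_cases hgg : g = g'
        · subst hgg
          have hbb : b0 ≠ b0' := by rintro rfl; exact hne rfl
          rw [← Set.image_inter (lift_inj k m s g),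
            Set.ncard_image_of_injective _ (lift_inj k m s g)]
          exact hB'.2 b0 hb0 b0' hb0' hbb
        · rw [Set.ncard_le_one (toFinite _)]
          rintro z ⟨⟨x0, -, rfl⟩, y0, -, hz⟩ w -
          simp only [lift] at hz
          exact (hgg (congrArg Prod.fst (Sum.inl_injective hz)).symm).elim
  refine ⟨⟨hsizes, hpair⟩, ?_, ?_⟩
  · -- count of BigFam
    have h1 : (TDfam k m s : Set (Set (Gam k m s))).ncard ≤ m * m := by
      calc (TDfam k m s).ncard ≤ (Set.univ : Set (ZMod m × ZMod m)).ncard :=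
            Set.ncard_image_le (toFinite _)
        _ = m * m := by rw [Set.ncard_univ, Nat.card_prod, Nat.card_zmod]
    have h2 : (⋃ g : Fin k, (Set.image (lift k m s g)) '' B').ncard ≤ k * B'.ncard := by
      have he : (⋃ g : Fin k, (Set.image (lift k m s g)) '' B')
          = ⋃ g ∈ (Finset.univ : Finset (Fin k)), (Set.image (lift k m s g)) '' B' := by
        simp
      rw [he]
      calc _ ≤ ∑ g : Fin k, ((Set.image (lift k m s g)) '' B').ncard :=
            ncard_biUnion_le _ _
        _ ≤ ∑ _g : Fin k, B'.ncard :=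
            Finset.sum_le_sum fun g _ => Set.ncard_image_le (toFinite _)
        _ = k * B'.ncard := by simp [mul_comm]
    calc (BigFam k m s B').ncard ≤ _ := Set.ncard_union_le _ _
      _ ≤ m * m + k * B'.ncard := add_le_add h1 h2
  · -- count of Unc
    set Touch : Set (Set (Gam k m s)) :=
      {S | ∃ u v : Gam k m s, S = {u, v} ∧
        (u ∈ Set.range (Sum.inr : Fin s → Gam k m s) ∨
         v ∈ Set.range (Sum.inr : Fin s → Gam k m s))} with hTouch
    have hsub : Unc (BigFam k m s B') ⊆
        (⋃ g : Fin k, (Set.image (lift k m s g)) '' (Unc B')) ∪ Touch := by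
      rintro S ⟨u, v, huv, rfl, hunc⟩
      rcases u with p | w
      · rcases v with q | w
        · obtain ⟨i, x⟩ := p
          obtain ⟨j, y⟩ := q
          by_cases hij : i = j
          · subst hij
            left
            have hxy : x ≠ y := by
              rintro rfl; exact huv rfl
            refine Set.mem_iUnion.mpr ⟨i, {x, y}, ⟨x, y, hxy, rfl, ?_⟩, ?_⟩
            · intro b0 hb0 hsubxy
              refine hunc (lift k m s i '' b0)
                (Or.inr (Set.mem_iUnion.mpr ⟨i, b0, hb0, rfl⟩)) ?_
              rintro z (rfl | rfl)
              · exact ⟨x, hsubxy (Or.inl rfl), rfl⟩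
              · exact ⟨y, hsubxy (Or.inr rfl), rfl⟩
            · rw [Set.image_pair]
              rfl
          · exfalso
            obtain ⟨a, d, hmem1, hmem2⟩ := block_cover hcop hij x y
            refine hunc (Sum.inl '' Block k m a d)
              (Or.inl ⟨(a, d), trivial, rfl⟩) ?_
            rintro z (rfl | rfl)
            · exact ⟨(i, x), hmem1, rfl⟩
            · exact ⟨(j, y), hmem2, rfl⟩
        · exact Or.inr ⟨Sum.inl p, Sum.inr w, rfl, Or.inr ⟨w, rfl⟩⟩
      · exact Or.inr ⟨Sum.inr w, v, rfl, Or.inl ⟨w, rfl⟩⟩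
    have hA : (⋃ g : Fin k, (Set.image (lift k m s g)) '' (Unc B')).ncard
        ≤ k * (Unc B').ncard := by
      have he : (⋃ g : Fin k, (Set.image (lift k m s g)) '' (Unc B'))
          = ⋃ g ∈ (Finset.univ : Finset (Fin k)), (Set.image (lift k m s g)) '' (Unc B') := by
        simp
      rw [he]
      calc _ ≤ ∑ g : Fin k, ((Set.image (lift k m s g)) '' (Unc B')).ncard :=
            ncard_biUnion_le _ _
        _ ≤ ∑ _g : Fin k, (Unc B').ncard :=
            Finset.sum_le_sum fun g _ => Set.ncard_image_le (toFinite _)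
        _ = k * (Unc B').ncard := by simp [mul_comm]
    have hT : Touch.ncard ≤ s * (k * m + s) := by
      have := pairs_touch_bound (Set.range (Sum.inr : Fin s → Gam k m s))
      have hW : (Set.range (Sum.inr : Fin s → Gam k m s)).ncard = s := by
        rw [← Set.image_univ, Set.ncard_image_of_injective _ Sum.inr_injective,
          Set.ncard_univ]
        simp
      have hcard : Nat.card (Gam k m s) = k * m + s := by
        simp [Gam, Nat.card_sum, Nat.card_prod, Nat.card_zmod]
      rw [hTouch]
      calc _ ≤ _ := this
        _ = s * (k * m + s) := by rw [hW, hcard]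
    calc (Unc (BigFam k m s B')).ncard ≤ _ := Set.ncard_le_ncard hsub (toFinite _)
      _ ≤ _ := Set.ncard_union_le _ _
      _ ≤ k * (Unc B').ncard + s * (k * m + s) := add_le_add hA hT
def Mk (k : ℕ) : ℕ := (k - 1).factorial

noncomputable def cseq (k : ℕ) : ℕ → ℝ
  | 0 => 1
  | (t + 1) => (1 + k * cseq k t) / (k : ℝ) ^ 2

def Aseq (k t : ℕ) : ℕ := t * (2 * k * Mk k + k)

lemma cseq_nonneg (k : ℕ) (t : ℕ) : 0 ≤ cseq k t := by
  induction t with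
  | zero => norm_num [cseq]
  | succ t ih =>
    rw [cseq]
    positivity

lemma emptyFam (k : ℕ) (hk : 2 ≤ k) (α : Type*) [Finite α] :
    ExFam k α ((Nat.card α : ℝ) * (Nat.card α : ℝ)) := by
  refine ⟨∅, ⟨by simp, by simp⟩, ?_⟩
  have := unc_ncard_le (∅ : Set (Set α))
  have h0 : ((∅ : Set (Set α)).ncard : ℝ) = 0 := by simp
  rw [h0, zero_add]
  calc ((Unc (∅ : Set (Set α))).ncard : ℝ) ≤ ((Nat.card α * Nat.card α : ℕ) : ℝ) := by
        exact_mod_cast this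
    _ = _ := by push_cast; ring

lemma coprime_of_mod (k : ℕ) (hk : 2 ≤ k) {m : ℕ} (hm : m % Mk k = 1 % Mk k)
    (hm1 : 1 ≤ m) : ∀ c : ℕ, 1 ≤ c → c < k → IsUnit ((c : ZMod m)) := by
  intro c hc1 hck
  rw [ZMod.isUnit_iff_coprime]
  by_contra hcop
  obtain ⟨p, hp, hpc, hpm⟩ := Nat.Prime.not_coprime_iff_dvd.mp hcop
  have hpk : p ≤ k - 1 := by
    have := Nat.le_of_dvd (by omega) hpc
    omega
  have hpM : p ∣ Mk k := Nat.dvd_factorial hp.pos hpk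
  have : p ∣ 1 := by
    have h1 : m % Mk k = 1 := by
      rw [hm]
      apply Nat.mod_eq_of_lt
      have : 2 ≤ Mk k ∨ Mk k = 1 := by
        rcases Nat.lt_or_ge (Mk k) 2 with h | h
        · right
          have := Nat.factorial_pos (k - 1)
          unfold Mk at *
          omega
        · left; exact h
      rcases this with h | h
      · omega
      · -- Mk k = 1 : then p ∣ 1 directly
        exfalso
        rw [h] at hpM
        exact hp.one_lt.ne' (Nat.dvd_one.mp hpM)
    have h2 : m = Mk k * (m / Mk k) + 1 := by
      conv_lhs => rw [← Nat.div_add_mod m (Mk k)]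
      omega
    have h3 : p ∣ Mk k * (m / Mk k) := hpM.mul_right _
    exact (Nat.dvd_add_right h3).mp (h2 ▸ hpm)
  exact hp.one_lt.ne' (Nat.dvd_one.mp this)

set_option maxHeartbeats 2000000 in
lemma exists_fam {k : ℕ} (hk : 2 ≤ k) (t : ℕ) (n : ℕ) :
    ExFam k (Fin n) (cseq k t * (n : ℝ) ^ 2 + (Aseq k t : ℝ) * (n : ℝ)) := by
  induction t generalizing n with
  | zero =>
    have := emptyFam k hk (Fin n)
    rw [Nat.card_eq_fintype_card, Fintype.card_fin] at this
    refine this.imp fun B hB => ⟨hB.1, le_trans hB.2 ?_⟩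
    simp [cseq, Aseq]
    nlinarith [sq_nonneg (n : ℝ)]
  | succ t ih =>
    set M := Mk k with hM
    have hM1 : 1 ≤ M := Nat.factorial_pos _
    by_cases hsmall : n < k * (M + 1)
    · -- small case : empty family
      have := emptyFam k hk (Fin n)
      rw [Nat.card_eq_fintype_card, Fintype.card_fin] at this
      refine this.imp fun B hB => ⟨hB.1, le_trans hB.2 ?_⟩
      have h1 : (n : ℝ) * n ≤ (k * (M + 1) : ℕ) * n := by
        have : (n : ℝ) ≤ ((k * (M + 1) : ℕ) : ℝ) := by
          exact_mod_cast hsmall.le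
        nlinarith [Nat.cast_nonneg (α := ℝ) n]
      have h2 : ((k * (M + 1) : ℕ) : ℝ) ≤ (Aseq k (t + 1) : ℝ) := by
        have hle : k * (M + 1) ≤ Aseq k (t + 1) := by
          unfold Aseq
          rw [← hM]
          have h0 : 2 * k * M + k ≤ (t + 1) * (2 * k * M + k) :=
            Nat.le_mul_of_pos_left _ (Nat.succ_pos t)
          have h2' : k * M ≤ 2 * k * M :=
            Nat.mul_le_mul (by omega : k ≤ 2 * k) (le_refl M)
          have h1' : k * (M + 1) = k * M + k := by ring
          have h3' : 2 * k * M = 2 * (k * M) := by ring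
          omega
        exact_mod_cast hle
      have h3 : 0 ≤ cseq k (t + 1) * (n : ℝ) ^ 2 := by
        have := cseq_nonneg k (t + 1)
        positivity
      have h4 := mul_le_mul_of_nonneg_right h2 (Nat.cast_nonneg (α := ℝ) n)
      linarith
    · -- main case
      push_neg at hsmall
      have hk0 : 0 < k := by omega
      have hnk : M + 1 ≤ n / k := by
        rw [Nat.le_div_iff_mul_le hk0, mul_comm]
        exact hsmall
      set q := (n / k - 1) / M with hq
      set m := M * q + 1 with hmdef
      have hq1 : 1 ≤ q := by
        rw [hq, Nat.le_div_iff_mul_le (by omega)]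
        omega
      have hm2 : 2 ≤ m := by
        have : 1 ≤ M * q := Nat.one_le_iff_ne_zero.mpr (by positivity)
        omega
      have hmq_le : M * q ≤ n / k - 1 := by
        rw [hq, mul_comm]
        exact Nat.div_mul_le_self _ _
      have hkm : k * m ≤ n := by
        have h1 : m ≤ n / k := by omega
        calc k * m ≤ k * (n / k) := Nat.mul_le_mul_left k h1
          _ ≤ n := Nat.mul_div_le n k
      set s := n - k * m with hs
      have hslt : s ≤ k * M := by
        have h1 : n / k - 1 < M * (q + 1) := by
          rw [hq]
          exact Nat.lt_mul_div_succ _ (by omega)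
        have h2 : n / k + 1 ≤ m + M := by
          have hexp : M * (q + 1) = M * q + M := by ring
          omega
        have h3 : n < k * (n / k + 1) := Nat.lt_mul_div_succ n hk0
        have h4 : n < k * (m + M) := lt_of_lt_of_le h3 (Nat.mul_le_mul_left k h2)
        rw [hs]
        have h5 : k * (m + M) = k * m + k * M := Nat.mul_add k m M
        omega
      haveI : NeZero m := ⟨by omega⟩
      have hcop : ∀ c : ℕ, 1 ≤ c → c < k → IsUnit ((c : ZMod m)) := by
        apply coprime_of_mod k hk _ (by omega)
        rw [hmdef, ← hM, Nat.mul_add_mod]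
      have e1 : Fin m ≃ ZMod m := (Fintype.equivFinOfCardEq (ZMod.card m)).symm
      obtain ⟨B', hGood', hcount'⟩ :=
        exFam_transfer e1 (ih m)
      obtain ⟨hGood, hc1, hc2⟩ := step (s := s) hk hcop hGood'
      have hcard : Fintype.card (Gam k m s) = n := by
        have h0 : Fintype.card (Gam k m s) = k * m + s := by
          simp [Gam, ZMod.card]
        rw [h0]
        omega
      refine exFam_transfer (Fintype.equivFinOfCardEq hcard)
        ⟨BigFam k m s B', hGood, ?_⟩
      -- real arithmetic
      have hb1 : ((BigFam k m s B').ncard : ℝ) ≤ (m : ℝ) * m + k * B'.ncard := by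
        exact_mod_cast hc1
      have hb2 : ((Unc (BigFam k m s B')).ncard : ℝ)
          ≤ (k : ℝ) * (Unc B').ncard + s * (k * m + s) := by
        exact_mod_cast hc2
      have hn : (k : ℝ) * m + s = n := by
        have : k * m + s = n := by omega
        exact_mod_cast this
      have hK2 : (2 : ℝ) ≤ k := by exact_mod_cast hk
      have hKpos : (0 : ℝ) < k := by linarith
      have hmn : (m : ℝ) ≤ (n : ℝ) / k := by
        rw [le_div_iff₀ hKpos]
        have : (k : ℝ) * m ≤ n := by exact_mod_cast hkm
        linarith
      have hsM : (s : ℝ) ≤ k * M := by exact_mod_cast hslt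
      have ha : 0 ≤ cseq k t := cseq_nonneg k t
      have hm0 : (0 : ℝ) ≤ m := Nat.cast_nonneg m
      have hn0 : (0 : ℝ) ≤ n := Nat.cast_nonneg n
      have hs0 : (0 : ℝ) ≤ s := Nat.cast_nonneg s
      have hA0 : (0 : ℝ) ≤ (Aseq k t : ℝ) := Nat.cast_nonneg _
      have hBU0 : (0 : ℝ) ≤ (B'.ncard : ℝ) + ((Unc B').ncard : ℝ) := by positivity
      have e_cseq : cseq k (t + 1) * (n : ℝ) ^ 2
          = (1 + k * cseq k t) * ((n : ℝ) / k) ^ 2 := by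
        rw [cseq]
        field_simp
      have h_m_sq : (m : ℝ) ^ 2 ≤ ((n : ℝ) / k) ^ 2 := by
        exact pow_le_pow_left₀ hm0 hmn 2
      have hAseq : (Aseq k (t + 1) : ℝ) = (Aseq k t : ℝ) + 2 * k * M + k := by
        have : Aseq k (t + 1) = Aseq k t + (2 * k * Mk k + k) := by
          unfold Aseq; ring
        rw [this, ← hM]
        push_cast
        ring
      have hkm_le : (k : ℝ) * m ≤ n := by exact_mod_cast hkm
      calc ((BigFam k m s B').ncard : ℝ) + ((Unc (BigFam k m s B')).ncard : ℝ)
          ≤ ((m : ℝ) * m + k * B'.ncard)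
            + ((k : ℝ) * (Unc B').ncard + s * (k * m + s)) := add_le_add hb1 hb2
        _ = (m : ℝ) ^ 2 + k * ((B'.ncard : ℝ) + ((Unc B').ncard : ℝ)) + s * ((k : ℝ) * m + s) := by
            ring
        _ ≤ (m : ℝ) ^ 2 + k * (cseq k t * (m : ℝ) ^ 2 + (Aseq k t : ℝ) * m)
            + ((k : ℝ) * M) * n := by
            have h1 : (k : ℝ) * ((B'.ncard : ℝ) + ((Unc B').ncard : ℝ))
                ≤ k * (cseq k t * (m : ℝ) ^ 2 + (Aseq k t : ℝ) * m) :=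
              mul_le_mul_of_nonneg_left hcount' (by linarith)
            have h2 : (s : ℝ) * ((k : ℝ) * m + s) ≤ ((k : ℝ) * M) * n := by
              rw [hn]
              exact mul_le_mul_of_nonneg_right hsM hn0
            linarith
        _ = (1 + k * cseq k t) * (m : ℝ) ^ 2 + (Aseq k t : ℝ) * ((k : ℝ) * m)
            + ((k : ℝ) * M) * n := by ring
        _ ≤ (1 + k * cseq k t) * ((n : ℝ) / k) ^ 2 + (Aseq k t : ℝ) * n
            + ((k : ℝ) * M) * n := by
            have h1 : (1 + k * cseq k t) * (m : ℝ) ^ 2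
                ≤ (1 + k * cseq k t) * ((n : ℝ) / k) ^ 2 :=
              mul_le_mul_of_nonneg_left h_m_sq (by nlinarith)
            have h2 : (Aseq k t : ℝ) * ((k : ℝ) * m) ≤ (Aseq k t : ℝ) * n :=
              mul_le_mul_of_nonneg_left hkm_le hA0
            linarith
        _ ≤ cseq k (t + 1) * (n : ℝ) ^ 2 + (Aseq k (t + 1) : ℝ) * n := by
            rw [e_cseq, hAseq]
            have hMr0 : (0 : ℝ) ≤ (M : ℝ) := Nat.cast_nonneg M
            have hint1 : (0 : ℝ) ≤ (k : ℝ) * (M : ℝ) * (n : ℝ) :=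
              mul_nonneg (mul_nonneg hKpos.le hMr0) hn0
            have hint2 : (0 : ℝ) ≤ (k : ℝ) * (n : ℝ) := mul_nonneg hKpos.le hn0
            linarith
lemma cseq_le {k : ℕ} (hk : 2 ≤ k) (t : ℕ) :
    cseq k t ≤ 1 / ((k : ℝ) * ((k : ℝ) - 1)) + (1 / (k : ℝ)) ^ t := by
  have hK2 : (2 : ℝ) ≤ (k : ℝ) := by exact_mod_cast hk
  have hK0 : (0 : ℝ) < k := by linarith
  have hK1 : (0 : ℝ) < (k : ℝ) - 1 := by linarith
  induction t with
  | zero =>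
    simp only [cseq, pow_zero]
    have : 0 ≤ 1 / ((k : ℝ) * ((k : ℝ) - 1)) := by positivity
    linarith
  | succ t ih =>
    rw [cseq]
    have key : (1 + (k : ℝ) * (1 / ((k : ℝ) * ((k : ℝ) - 1)) + (1 / (k : ℝ)) ^ t))
        / (k : ℝ) ^ 2
        = 1 / ((k : ℝ) * ((k : ℝ) - 1)) + (1 / (k : ℝ)) ^ (t + 1) := by
      rw [pow_succ (1 / (k : ℝ)) t]
      generalize (1 / (k : ℝ)) ^ t = y
      field_simp
      ring
    have hmono : (1 + (k : ℝ) * cseq k t) / (k : ℝ) ^ 2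
        ≤ (1 + (k : ℝ) * (1 / ((k : ℝ) * ((k : ℝ) - 1)) + (1 / (k : ℝ)) ^ t))
          / (k : ℝ) ^ 2 := by
      apply div_le_div_of_nonneg_right _ (by positivity)
      · nlinarith
    exact le_trans hmono (le_of_eq key)

lemma closureLines_empty_sizes (n k : ℕ) (hk : 2 ≤ k) :
    ∀ L ∈ closureLines (∅ : Set (Set (Fin n))), L.ncard ≤ k := by
  rintro L ⟨u, v, huv, rfl⟩
  rw [affCl_pair_self huv (by simp), Set.ncard_pair huv]
  exact hk

lemma mbar_le_bound {k : ℕ} (hk : 2 ≤ k) (t n : ℕ) :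
    (mbar n k : ℝ) ≤ cseq k t * (n : ℝ) ^ 2 + (Aseq k t : ℝ) * (n : ℝ) := by
  obtain ⟨B, hB, hcount⟩ := exists_fam hk t n
  have h1 : mbar n k ≤ (closureLines B).ncard :=
    Nat.sInf_le ⟨B, lines_ncard_le hk hB, rfl⟩
  have h2 : (closureLines B).ncard ≤ B.ncard + (Unc B).ncard :=
    le_trans (Set.ncard_le_ncard (lines_subset hB) (Set.toFinite _))
      (Set.ncard_union_le _ _)
  calc (mbar n k : ℝ) ≤ ((B.ncard + (Unc B).ncard : ℕ) : ℝ) := by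
        exact_mod_cast le_trans h1 h2
    _ = (B.ncard : ℝ) + ((Unc B).ncard : ℝ) := by push_cast; ring
    _ ≤ _ := hcount

lemma mbar_lower {k : ℕ} (hk : 2 ≤ k) (n : ℕ) :
    n * n - n ≤ mbar n k * (k * k - k) := by
  have hne : { m | ∃ E : Set (Set (Fin n)),
      (∀ L ∈ closureLines E, L.ncard ≤ k) ∧ (closureLines E).ncard = m }.Nonempty :=
    ⟨_, ∅, closureLines_empty_sizes n k hk, rfl⟩
  obtain ⟨E, hE, hEq⟩ := Nat.sInf_mem hne
  calc n * n - n ≤ (closureLines E).ncard * (k * k - k) := lines_lower_bound E hE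
    _ = mbar n k * (k * k - k) := by rw [hEq]; rfl

end Stmt13

open Stmt13 Filter in
/-- For every fixed `k ≥ 2`, `m̄(n, k) · k(k-1)/(n(n-1)) → 1` as `n → ∞`. -/
theorem stmt_13 (k : ℕ) (hk : 2 ≤ k) :
    Filter.Tendsto
      (fun n : ℕ => (mbar n k : ℝ) * ((k : ℝ) * ((k : ℝ) - 1)) / ((n : ℝ) * ((n : ℝ) - 1)))
      Filter.atTop (nhds 1) := by
  have hK2 : (2 : ℝ) ≤ (k : ℝ) := by exact_mod_cast hk
  have hK0 : (0 : ℝ) < k := by linarith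
  have hK1 : (0 : ℝ) < (k : ℝ) - 1 := by linarith
  set KK : ℝ := (k : ℝ) * ((k : ℝ) - 1) with hKK
  have hKKpos : 0 < KK := mul_pos hK0 hK1
  rw [Metric.tendsto_atTop]
  intro ε hε
  -- choose depth t
  have htend : Tendsto (fun t : ℕ => (1 / (k : ℝ)) ^ t * KK) atTop (nhds 0) := by
    have h1 : Tendsto (fun t : ℕ => (1 / (k : ℝ)) ^ t) atTop (nhds 0) := by
      apply tendsto_pow_atTop_nhds_zero_of_lt_one (by positivity)
      rw [div_lt_one hK0]; linarith
    simpa using h1.mul_const KK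
  obtain ⟨t, ht⟩ := (htend.eventually (gt_mem_nhds (by linarith : (0:ℝ) < ε/2))).exists
  set a : ℝ := cseq k t with ha
  set A : ℝ := (Aseq k t : ℝ) with hA
  have ha0 : 0 ≤ a := cseq_nonneg k t
  have hA0 : 0 ≤ A := Nat.cast_nonneg _
  have haKK : a * KK < 1 + ε / 2 := by
    have h1 : a ≤ 1 / KK + (1 / (k : ℝ)) ^ t := cseq_le hk t
    have h2 : a * KK ≤ (1 / KK + (1 / (k : ℝ)) ^ t) * KK :=
      mul_le_mul_of_nonneg_right h1 hKKpos.le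
    have h3 : (1 / KK + (1 / (k : ℝ)) ^ t) * KK = 1 + (1 / (k : ℝ)) ^ t * KK := by
      field_simp
    rw [h3] at h2
    linarith
  -- limit of the upper-bound expression
  have h0 : Tendsto (fun n : ℕ => (n : ℝ) - 1) atTop atTop :=
    tendsto_atTop_add_const_right _ (-1) tendsto_natCast_atTop_atTop
  have h_inv : Tendsto (fun n : ℕ => ((n : ℝ) - 1)⁻¹) atTop (nhds 0) :=
    h0.inv_tendsto_atTop
  have HG : Tendsto
      (fun n : ℕ => (a * KK) * (1 + ((n : ℝ) - 1)⁻¹) + (A * KK) * ((n : ℝ) - 1)⁻¹)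
      atTop (nhds ((a * KK) * (1 + 0) + (A * KK) * 0)) := by
    exact ((tendsto_const_nhds.add h_inv).const_mul _).add (h_inv.const_mul _)
  have HGlt : ∀ᶠ n : ℕ in atTop,
      (a * KK) * (1 + ((n : ℝ) - 1)⁻¹) + (A * KK) * ((n : ℝ) - 1)⁻¹ < 1 + ε := by
    apply HG.eventually_lt_const
    simp only [add_zero, mul_zero, mul_one]
    linarith
  obtain ⟨N1, hN1⟩ := eventually_atTop.mp HGlt
  refine ⟨max N1 2, fun n hn => ?_⟩
  have hn1 : N1 ≤ n := le_trans (le_max_left _ _) hn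
  have hn2 : 2 ≤ n := le_trans (le_max_right _ _) hn
  have hnr2 : (2 : ℝ) ≤ (n : ℝ) := by exact_mod_cast hn2
  have hnr0 : (0 : ℝ) < n := by linarith
  have hnr1 : (0 : ℝ) < (n : ℝ) - 1 := by linarith
  have hD : (0 : ℝ) < (n : ℝ) * ((n : ℝ) - 1) := mul_pos hnr0 hnr1
  -- lower bound : 1 ≤ f n
  have hlow : (n : ℝ) * ((n : ℝ) - 1) ≤ (mbar n k : ℝ) * KK := by
    have h := mbar_lower hk n
    have hcast : ((n * n - n : ℕ) : ℝ) ≤ ((mbar n k * (k * k - k) : ℕ) : ℝ) := by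
      exact_mod_cast h
    have e1 : ((n * n - n : ℕ) : ℝ) = (n : ℝ) * ((n : ℝ) - 1) := by
      rw [Nat.cast_sub (Nat.le_mul_of_pos_left n (by omega))]
      push_cast; ring
    have e2 : ((mbar n k * (k * k - k) : ℕ) : ℝ) = (mbar n k : ℝ) * KK := by
      rw [Nat.cast_mul, Nat.cast_sub (Nat.le_mul_of_pos_left k (by omega))]
      push_cast [hKK]; ring
    rw [e1, e2] at hcast
    exact hcast
  have hf1 : 1 ≤ (mbar n k : ℝ) * KK / ((n : ℝ) * ((n : ℝ) - 1)) :=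
    (one_le_div hD).mpr hlow
  -- upper bound
  have hup : (mbar n k : ℝ) * KK / ((n : ℝ) * ((n : ℝ) - 1))
      ≤ (a * KK) * (1 + ((n : ℝ) - 1)⁻¹) + (A * KK) * ((n : ℝ) - 1)⁻¹ := by
    have h1 : (mbar n k : ℝ) * KK ≤ (a * (n : ℝ) ^ 2 + A * n) * KK :=
      mul_le_mul_of_nonneg_right (mbar_le_bound hk t n) hKKpos.le
    have h2 : (mbar n k : ℝ) * KK / ((n : ℝ) * ((n : ℝ) - 1))
        ≤ (a * (n : ℝ) ^ 2 + A * n) * KK / ((n : ℝ) * ((n : ℝ) - 1)) :=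
      div_le_div_of_nonneg_right h1 hD.le
    have h3 : (a * (n : ℝ) ^ 2 + A * n) * KK / ((n : ℝ) * ((n : ℝ) - 1))
        = (a * KK) * (1 + ((n : ℝ) - 1)⁻¹) + (A * KK) * ((n : ℝ) - 1)⁻¹ := by
      field_simp
      ring
    rw [h3] at h2
    exact h2
  have hflt : (mbar n k : ℝ) * KK / ((n : ℝ) * ((n : ℝ) - 1)) < 1 + ε :=
    lt_of_le_of_lt hup (hN1 n hn1)
  rw [Real.dist_eq, abs_lt]
  constructor <;> [linarith; linarith]
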